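/- Let F : M → R^{n+1} be a smooth embedding with unit normal ν, and define ρ(x) = max{ sup_{y ≠ x} ( −2⟨F(x)−F(y), ν(x)⟩/|F(x)−F(y)|² ), 0 }. Then −ρ(x) ≤ λ_1(x), i.e. every principal curvature is bounded below by −ρ(x). -/

import Mathlib

open RealInnerProductSpace

/-- If `h` is nonnegative, `h 0 = 0`, `h' 0 = 0`, and `h'` has a derivative at `0`,
then that second derivative is nonnegative. -/
lemma second_deriv_nonneg_at_min (h : ℝ → ℝ) (L : ℝ)
    (hcont : Continuous h)
    (hH : HasDerivAt (deriv h) L 0)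
    (h0 : h 0 = 0) (h0' : deriv h 0 = 0)
    (hnn : ∀ t, 0 ≤ h t) : 0 ≤ L := by
  by_contra hL
  push_neg at hL
  rw [hasDerivAt_iff_tendsto_slope] at hH
  have hev : ∀ᶠ t in nhdsWithin 0 {(0 : ℝ)}ᶜ, slope (deriv h) 0 t < 0 :=
    hH.eventually_lt_const hL
  rw [eventually_nhdsWithin_iff, Metric.eventually_nhds_iff] at hev
  obtain ⟨δ, hδ, hball⟩ := hev
  have hneg : ∀ t ∈ Set.Ioo (0 : ℝ) δ, deriv h t < 0 := by
    intro t ht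
    have hdist : dist t 0 < δ := by
      rw [Real.dist_eq, sub_zero, abs_of_pos ht.1]; exact ht.2
    have := hball hdist (by exact ne_of_gt ht.1)
    rw [slope_def_field, h0', sub_zero, sub_zero] at this
    have ht0 : (0:ℝ) < t := ht.1
    by_contra hc
    push_neg at hc
    have : 0 ≤ deriv h t / t := div_nonneg hc (le_of_lt ht0)
    linarith
  have hanti : StrictAntiOn h (Set.Icc 0 (δ/2)) := by
    apply strictAntiOn_of_deriv_neg (convex_Icc _ _) hcont.continuousOn
    intro t ht
    rw [interior_Icc] at ht
    exact hneg t ⟨ht.1, by linarith [ht.2]⟩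
  have h1 : h (δ/2) < h 0 := by
    apply hanti (Set.left_mem_Icc.mpr (by linarith)) (Set.right_mem_Icc.mpr (by linarith))
    linarith
  rw [h0] at h1
  exact absurd h1 (not_lt.mpr (hnn _))

/-- Every principal curvature (realized as the normal curvature `-⟨c''(0), ν x⟩` of a curve
in the hypersurface, tangent at `x`, with outward unit normal `ν`) is bounded below by
`-ρ(x)`, where `ρ(x) = max{ sup_{y ≠ x} (−2⟨F(x)−F(y), ν(x)⟩/|F(x)−F(y)|²), 0 }` is the
reciprocal of the outer radius at `x`. -/
theorem stmt1 {n : ℕ} {M : Type*}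
    (F : M → EuclideanSpace ℝ (Fin (n + 1)))
    (ν : M → EuclideanSpace ℝ (Fin (n + 1)))
    (hF : Function.Injective F)
    (x : M) (hν : ‖ν x‖ = 1)
    (ρ : ℝ)
    (hρ : IsLUB ({r : ℝ | ∃ y : M, y ≠ x ∧
      r = -(2 * (inner ℝ (F x - F y) (ν x) : ℝ)) / ‖F x - F y‖ ^ 2} ∪ {0}) ρ)
    (lam : ℝ) (c : ℝ → EuclideanSpace ℝ (Fin (n + 1)))
    (hc : ContDiff ℝ 2 c)
    (hrange : ∀ t, c t ∈ Set.range F)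
    (hc0 : c 0 = F x)
    (hunit : ‖deriv c 0‖ = 1)
    (htang : (inner ℝ (deriv c 0) (ν x) : ℝ) = 0)
    (hlam : lam = -(inner ℝ (deriv (deriv c) 0) (ν x) : ℝ)) :
    -ρ ≤ lam := by
  set p := F x with hp
  -- differentiability facts
  have h2 := (contDiff_succ_iff_deriv (n := 1)).mp (hc.of_le (by norm_num))
  obtain ⟨hcdiff, -, hc1⟩ := h2
  have h1 := (contDiff_succ_iff_deriv (n := 0)).mp (hc1.of_le (by norm_num))
  obtain ⟨hc'diff, -, -⟩ := h1
  have hcd : ∀ t, HasDerivAt c (deriv c t) t := fun t => (hcdiff t).hasDerivAt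
  have hcd' : HasDerivAt (deriv c) (deriv (deriv c) 0) 0 := (hc'diff 0).hasDerivAt
  -- the function h
  set u : ℝ → EuclideanSpace ℝ (Fin (n + 1)) := fun t => c t - p with hu
  set h : ℝ → ℝ := fun t => ρ * ⟪u t, u t⟫ - 2 * ⟪u t, ν x⟫ with hh
  have hud : ∀ t, HasDerivAt u (deriv c t) t := fun t => (hcd t).sub_const p
  have hu0 : u 0 = 0 := by simp [hu, hc0]
  -- first derivative of h
  set h' : ℝ → ℝ := fun t =>
    ρ * (⟪u t, deriv c t⟫ + ⟪deriv c t, u t⟫) - 2 * ⟪deriv c t, ν x⟫ with hh'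
  have hhd : ∀ t, HasDerivAt h (h' t) t := by
    intro t
    exact (((hud t).inner ℝ (hud t)).const_mul ρ).sub
      ((((hud t).inner ℝ (hasDerivAt_const t (ν x))).const_mul 2).congr_deriv
        (by simp [mul_comm]))
  have hderiv_h : deriv h = h' := funext fun t => (hhd t).deriv
  -- second derivative at 0
  have hhd' : HasDerivAt h' (ρ * 2 - 2 * ⟪deriv (deriv c) 0, ν x⟫) 0 := by
    have hA : HasDerivAt (fun t => (⟪u t, deriv c t⟫ : ℝ) + ⟪deriv c t, u t⟫)
        ((⟪u 0, deriv (deriv c) 0⟫ + ⟪deriv c 0, deriv c 0⟫) +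
          (⟪deriv c 0, deriv c 0⟫ + ⟪deriv (deriv c) 0, u 0⟫)) 0 :=
      ((hud 0).inner ℝ hcd').add (hcd'.inner ℝ (hud 0))
    have hB : HasDerivAt (fun t => (⟪deriv c t, ν x⟫ : ℝ))
        (⟪deriv (deriv c) 0, ν x⟫) 0 := by
      have := hcd'.inner ℝ (hasDerivAt_const (0:ℝ) (ν x))
      simpa [htang] using this
    have := ((hA.const_mul ρ).sub (hB.const_mul 2))
    have hnorm : (⟪deriv c 0, deriv c 0⟫ : ℝ) = 1 := by
      rw [real_inner_self_eq_norm_sq, hunit]; norm_num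
    refine this.congr_deriv ?_
    rw [hu0, hnorm]
    simp only [inner_zero_left, inner_zero_right]
    ring
  -- h is nonnegative
  have hnn : ∀ t, 0 ≤ h t := by
    intro t
    obtain ⟨y, hy⟩ := hrange t
    by_cases hyx : y = x
    · have : u t = 0 := by simp [hu, ← hy, hyx, hp]
      simp [hh, this]
    · have hmem : -(2 * (inner ℝ (F x - F y) (ν x) : ℝ)) / ‖F x - F y‖ ^ 2 ∈
          ({r : ℝ | ∃ y : M, y ≠ x ∧
            r = -(2 * (inner ℝ (F x - F y) (ν x) : ℝ)) / ‖F x - F y‖ ^ 2} ∪ {0}) :=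
        Or.inl ⟨y, hyx, rfl⟩
      have hle := hρ.1 hmem
      have hne : F x - F y ≠ 0 := sub_ne_zero.mpr (fun e => hyx (hF e.symm))
      have hpos : (0:ℝ) < ‖F x - F y‖ ^ 2 := by
        have := norm_pos_iff.mpr hne
        positivity
      rw [div_le_iff₀ hpos] at hle
      have huy : F x - F y = -(u t) := by rw [hu]; simp [← hy, hp]
      rw [huy, inner_neg_left, norm_neg] at hle
      have hns : ‖u t‖ ^ 2 = (⟪u t, u t⟫ : ℝ) := (real_inner_self_eq_norm_sq _).symm
      rw [hns] at hle
      simp only [hh]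
      nlinarith [hle]
  -- apply the key lemma
  have hcont : Continuous h := by
    apply Continuous.sub
    · exact continuous_const.mul ((hcdiff.continuous.sub continuous_const).inner
        (hcdiff.continuous.sub continuous_const))
    · exact continuous_const.mul ((hcdiff.continuous.sub continuous_const).inner
        continuous_const)
  have h0 : h 0 = 0 := by simp [hh, hu0]
  have h0' : deriv h 0 = 0 := by
    rw [hderiv_h, hh']
    simp [hu0, htang]
  have hkey : 0 ≤ ρ * 2 - 2 * (⟪deriv (deriv c) 0, ν x⟫ : ℝ) := by
    apply second_deriv_nonneg_at_min h _ hcont _ h0 h0' hnn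
    rw [hderiv_h]
    exact hhd'
  rw [hlam]
  linarith
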